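/- (Theorem 4) Let λ : V → ℝ with λ ≥ 0, and let v_1,…,v_N be a greedy ordering of V for λ with associated priority vector p. Then p minimizes the objective max_{i∈V} (λ_i + Σ_{j∈S_i^{p'}} λ_j) over all priority vectors p': for every bijection p' from V to {1,…,N}, max_{i∈V} (λ_i + Σ_{j∈S_i^p} λ_j) ≤ max_{i∈V} (λ_i + Σ_{j∈S_i^{p'}} λ_j). -/

import Mathlib

open Finset Filter Topology

variable {V : Type*}

/-- The set `S_i^p` of higher-priority neighbors of link `i` in the interference graph `G`,
under the priority map `p` (a smaller value means a higher priority). -/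
def hpNbrs [Fintype V] [DecidableEq V] (G : SimpleGraph V) [DecidableRel G.Adj]
    (p : V → ℕ) (i : V) : Finset V :=
  (G.neighborFinset i).filter fun j => p j < p i

/-- The maximal schedule `σ(B,p)` with priority `p` on the backlogged set `B`:
`i ∈ σ(B,p)` iff `i ∈ B` and no higher-priority neighbor of `i` is in `σ(B,p)`. -/
def sched [Fintype V] [DecidableEq V] (G : SimpleGraph V) [DecidableRel G.Adj]
    (p : V → ℕ) (B : Set V) (i : V) : Prop :=
  i ∈ B ∧ ∀ j, G.Adj i j → p j < p i → ¬ sched G p B j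
termination_by p i

/-- The numerical priority values of a priority vector `p : V ≃ Fin N`
(the link `i` with `p i = 0` has the highest priority). -/
def pv [Fintype V] (p : V ≃ Fin (Fintype.card V)) : V → ℕ := fun i => (p i : ℕ)

/-- The tail `{v_k, …, v_N}` of an enumeration `v` of `V`, from index `k` on. -/
def tailSet [Fintype V] [DecidableEq V] (v : Fin (Fintype.card V) ≃ V)
    (k : Fin (Fintype.card V)) : Finset V :=
  Finset.univ.filter fun w => k ≤ v.symm w

/-- `λ_u + Σ_{w ∈ N_u ∩ S} λ_w`: the weight of link `u` relative to the set `S`. -/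
def wgt [Fintype V] [DecidableEq V] (G : SimpleGraph V) [DecidableRel G.Adj]
    (lam : V → ℝ) (u : V) (S : Finset V) : ℝ :=
  lam u + ∑ w ∈ G.neighborFinset u ∩ S, lam w

/-- `v` is a greedy ordering of `V` for `λ`: every `v_k` minimizes the weight relative to
the remaining tail `{v_k, …, v_N}` among the links of that tail. -/
def GreedyOrdering [Fintype V] [DecidableEq V] (G : SimpleGraph V) [DecidableRel G.Adj]
    (lam : V → ℝ) (v : Fin (Fintype.card V) ≃ V) : Prop :=
  ∀ k u : Fin (Fintype.card V), k ≤ u →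
    wgt G lam (v k) (tailSet v k) ≤ wgt G lam (v u) (tailSet v k)

/-- The priority vector associated with an enumeration `v`: `v_1` receives the lowest
priority, and links chosen later receive higher priorities.  With it,
`S_{v_k}^p = N_{v_k} ∩ {v_{k+1}, …, v_N}`. -/
def assocPrio [Fintype V] (v : Fin (Fintype.card V) ≃ V) : V ≃ Fin (Fintype.card V) :=
  v.symm.trans Fin.revPerm

/-- Theorem 4: the priority vector `p` associated with a greedy ordering of
`V` for `λ` minimizes `max_{i ∈ V} (λ_i + Σ_{j ∈ S_i^{p'}} λ_j)` over all priority
vectors `p'`. -/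
theorem greedy_minimizes_max_load [Fintype V] [DecidableEq V] [Nonempty V]
    (G : SimpleGraph V) [DecidableRel G.Adj]
    (lam : V → ℝ) (hlam : ∀ i, 0 ≤ lam i)
    (v : Fin (Fintype.card V) ≃ V) (hv : GreedyOrdering G lam v) :
    ∀ p' : V ≃ Fin (Fintype.card V),
      Finset.univ.sup' Finset.univ_nonempty
          (fun i => lam i + ∑ j ∈ hpNbrs G (pv (assocPrio v)) i, lam j) ≤
        Finset.univ.sup' Finset.univ_nonempty
          (fun i => lam i + ∑ j ∈ hpNbrs G (pv p') i, lam j) := by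
  intro p'
  apply Finset.sup'_le
  intro i _
  set k := v.symm i with hk
  have hvk : v k = i := v.apply_symm_apply i
  obtain ⟨u, hu, hmax⟩ := Finset.exists_max_image (tailSet v k) (pv p')
    ⟨i, by simp [tailSet, hk]⟩
  have hutail : k ≤ v.symm u := by simpa [tailSet] using hu
  have h1 : lam i + ∑ j ∈ hpNbrs G (pv (assocPrio v)) i, lam j
      = wgt G lam i (tailSet v k) := by
    unfold wgt
    congr 1
    apply Finset.sum_congr _ (fun _ _ => rfl)
    ext j
    simp only [hpNbrs, Finset.mem_filter, Finset.mem_inter,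
      SimpleGraph.mem_neighborFinset, tailSet, Finset.mem_univ, true_and]
    constructor
    · rintro ⟨hadj, hlt⟩
      refine ⟨hadj, ?_⟩
      have h2 : (v.symm j).rev < (v.symm i).rev := by
        simpa [pv, assocPrio, Fin.lt_def] using hlt
      exact (Fin.rev_lt_rev.mp h2).le
    · rintro ⟨hadj, hle⟩
      refine ⟨hadj, ?_⟩
      have hne : v.symm j ≠ k := by
        rw [hk]
        exact fun h => hadj.ne' (v.symm.injective h)
      have h2 : k < v.symm j := lt_of_le_of_ne hle (Ne.symm hne)
      have h3 : (v.symm j).rev < (v.symm i).rev := Fin.rev_lt_rev.mpr (hk ▸ h2)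
      simpa [pv, assocPrio, Fin.lt_def] using h3
  have h2 : wgt G lam i (tailSet v k) ≤ wgt G lam u (tailSet v k) := by
    have := hv k (v.symm u) hutail
    rwa [hvk, v.apply_symm_apply] at this
  have h3 : wgt G lam u (tailSet v k) ≤ lam u + ∑ j ∈ hpNbrs G (pv p') u, lam j := by
    unfold wgt
    refine add_le_add (le_refl _) (Finset.sum_le_sum_of_subset_of_nonneg ?_ ?_)
    · intro j hj
      simp only [Finset.mem_inter, SimpleGraph.mem_neighborFinset] at hj
      obtain ⟨hadj, hjt⟩ := hj
      simp only [hpNbrs, Finset.mem_filter, SimpleGraph.mem_neighborFinset]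
      refine ⟨hadj, lt_of_le_of_ne (hmax j hjt) ?_⟩
      intro h
      exact hadj.ne' (p'.injective (Fin.val_injective h))
    · exact fun j _ _ => hlam j
  calc lam i + ∑ j ∈ hpNbrs G (pv (assocPrio v)) i, lam j
      ≤ lam u + ∑ j ∈ hpNbrs G (pv p') u, lam j := by
        rw [h1]; exact h2.trans h3
    _ ≤ _ := Finset.le_sup' (fun i => lam i + ∑ j ∈ hpNbrs G (pv p') i, lam j) (Finset.mem_univ u)
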